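/- arXiv:1703.07500 — 3 statements merged into one kernel-verified Lean document; each statement's English description precedes it below -/
import Mathlib

section
/- (Theorem 1, converse: no perfect predictor when B lacks full column rank.) Let A be a real m×p matrix, B a real m×q matrix, d ∈ ℝ^m, let J_L ∈ ℝ^p, J_Y ∈ ℝ^q, J_Z ∈ ℝ^r be row vectors and v_Z ∈ ℝ^r fixed. Suppose there exists w ∈ ℝ^q with B·w = 0 and J_Y·w ≠ 0, and suppose there exists at least one feasible pair (v_L⁰, v_Y⁰) with A·v_L⁰ + B·v_Y⁰ = d. Then there is no function φ : ℝ^p → ℝ such that φ(v_L) = J_L·v_L + J_Y·v_Y + J_Z·v_Z for every pair (v_L, v_Y) satisfying A·v_L + B·v_Y = d. -/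
open Matrix

/-- Theorem 1, converse: if `B·w = 0` for some `w` with `J_Y·w ≠ 0` and the
constraint set is nonempty, then no function of `v_L` alone can reproduce the
pseudo-boundary injection `J_L·v_L + J_Y·v_Y + J_Z·v_Z` on all feasible pairs. -/
theorem no_perfect_predictor {m p q r : ℕ}
    (A : Matrix (Fin m) (Fin p) ℝ) (B : Matrix (Fin m) (Fin q) ℝ) (d : Fin m → ℝ)
    (JL : Fin p → ℝ) (JY : Fin q → ℝ) (JZ : Fin r → ℝ) (vZ : Fin r → ℝ)
    (w : Fin q → ℝ) (hBw : B.mulVec w = 0) (hJYw : JY ⬝ᵥ w ≠ 0)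
    (vL0 : Fin p → ℝ) (vY0 : Fin q → ℝ)
    (hfeas : A.mulVec vL0 + B.mulVec vY0 = d) :
    ¬ ∃ φ : (Fin p → ℝ) → ℝ,
        ∀ (vL : Fin p → ℝ) (vY : Fin q → ℝ),
          A.mulVec vL + B.mulVec vY = d →
          φ vL = JL ⬝ᵥ vL + JY ⬝ᵥ vY + JZ ⬝ᵥ vZ := by
  rintro ⟨φ, hφ⟩
  have h1 := hφ vL0 vY0 hfeas
  have h2 := hφ vL0 (vY0 + w) (by
    rw [mulVec_add, hBw, add_zero]; exact hfeas)
  rw [dotProduct_add] at h2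
  apply hJYw
  have := h1.symm.trans h2
  linarith
end

section
/- (Attacker-computed equals actual flow perturbation, eq. (35) of the paper.) Let n be a positive integer, L a subset of Fin n, l_f, l_t ∈ L with l_f ≠ l_t, and x ∈ ℝ with x ≠ 0. Define Γ : Fin n → ℝ with Γ(l_f) = 1/x, Γ(l_t) = −1/x, and zero elsewhere, and Γ̄ : L → ℝ with Γ̄(l_f) = 1/x, Γ̄(l_t) = −1/x, and zero elsewhere. Let k : Fin n → ℝ and H a real n×n matrix satisfy the row-vector identity k·H = Γ (i.e., vecMul k H = Γ), and let k̄ : L → ℝ and H̄ a real L×L matrix satisfy k̄·H̄ = Γ̄. Let c : Fin n → ℝ vanish outside L and let c̄ be its restriction to L. Then k̄ · (H̄·c̄) = k · (H·c), i.e., K̄_l·H̄·c̄ = K_l·H·c. -/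
open Matrix

/-- Attacker-computed equals actual flow perturbation (eq. (35)): if the global
row `k = K_l` satisfies `k·H = Γ`, the local row `k̄ = K̄_l` satisfies
`k̄·H̄ = Γ̄`, where `Γ, Γ̄` have the two nonzero entries `1/x` at `l_f` and
`−1/x` at `l_t`, and the attack vector `c` is supported inside `L` with
restriction `c̄`, then `k̄ ⬝ (H̄·c̄) = k ⬝ (H·c)`. -/
theorem attacker_computed_flow_perturbation {n : ℕ} (hn : 0 < n)
    (L : Finset (Fin n))
    (lf lt : Fin n) (hlf : lf ∈ L) (hlt : lt ∈ L) (hne : lf ≠ lt)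
    (x : ℝ) (hx : x ≠ 0)
    (Γ : Fin n → ℝ)
    (hΓ : Γ = fun i => if i = lf then 1 / x else if i = lt then -(1 / x) else 0)
    (Γb : {i // i ∈ L} → ℝ)
    (hΓb : Γb = fun (i : {i // i ∈ L}) => if (i : Fin n) = lf then 1 / x
                         else if (i : Fin n) = lt then -(1 / x) else 0)
    (k : Fin n → ℝ) (H : Matrix (Fin n) (Fin n) ℝ)
    (hkH : Matrix.vecMul k H = Γ)
    (kb : {i // i ∈ L} → ℝ) (Hb : Matrix {i // i ∈ L} {i // i ∈ L} ℝ)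
    (hkbHb : Matrix.vecMul kb Hb = Γb)
    (c : Fin n → ℝ) (hc : ∀ i, i ∉ L → c i = 0)
    (cb : {i // i ∈ L} → ℝ) (hcb : cb = fun (i : {i // i ∈ L}) => c i) :
    kb ⬝ᵥ Hb.mulVec cb = k ⬝ᵥ H.mulVec c := by
  rw [dotProduct_mulVec, dotProduct_mulVec, hkH, hkbHb, hΓ, hΓb, hcb]
  simp only [dotProduct]
  rw [show (Finset.univ : Finset {i // i ∈ L}) = L.attach from rfl,
    Finset.sum_attach L (fun i => (if i = lf then 1/x else if i = lt then -(1/x) else 0) * c i)]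
  exact Finset.sum_subset (Finset.subset_univ L)
    (fun i _ hi => by rw [hc i hi, mul_zero])
end

section
/- (Theorem 2: attacker-computable upper bound on the physical target-line flow.) Let K be a real n_br×n matrix, G an n×n_g matrix, H an n×n matrix, P_G ∈ ℝ^{n_g}, P_D ∈ ℝ^n, Pmax ∈ ℝ^{n_br}, l a line index, and c ∈ ℝ^n an attack vector. Let L ⊆ Fin n, let l_f, l_t ∈ L with l_f ≠ l_t, x ≠ 0, and let Γ : Fin n → ℝ and Γ̄ : L → ℝ be the vectors with entries 1/x at l_f, −1/x at l_t, and zero elsewhere. Assume: (i) c(i) = 0 for all i ∉ L and c̄ is the restriction of c to L; (ii) the row K_l of K satisfies K_l·H = Γ, and the local row K̄_l and local matrix H̄ satisfy K̄_l·H̄ = Γ̄; (iii) the cyber flow P^c := K·(G·P_G − P_D + H·c) satisfies P^c_l ≤ Pmax_l. Then the physical flow P^p := K·(G·P_G − P_D) satisfies P^p_l ≤ Pmax_l − K̄_l·(H̄·c̄). In other words, the physical power flow on the target line l resulting from the attack vector c̄ is upper bounded by P_l^{ub} = Pmax_l − K̄_l·H̄·c̄, a quantity computable from the local network alone. -/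
open Matrix

/-- Theorem 2: attacker-computable upper bound on the physical target-line flow.
Under the PTDF structure `K_l·H = Γ` and `K̄_l·H̄ = Γ̄` (two nonzero entries
`1/x` at `l_f` and `−1/x` at `l_t`, with `l_f, l_t` inside the sub-network `L`),
an attack vector `c` supported inside `L` with restriction `c̄`, and the OPF
thermal limit `P^c_l ≤ Pmax_l` on the cyber flow, the physical flow satisfies
`P^p_l ≤ Pmax_l − K̄_l·(H̄·c̄)`. -/
theorem physical_flow_upper_bound {n n_br n_g : ℕ} (hn : 0 < n)
    (K : Matrix (Fin n_br) (Fin n) ℝ) (G : Matrix (Fin n) (Fin n_g) ℝ)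
    (H : Matrix (Fin n) (Fin n) ℝ)
    (PG : Fin n_g → ℝ) (PD : Fin n → ℝ) (Pmax : Fin n_br → ℝ)
    (l : Fin n_br) (c : Fin n → ℝ)
    (L : Finset (Fin n))
    (lf lt : Fin n) (hlf : lf ∈ L) (hlt : lt ∈ L) (hne : lf ≠ lt)
    (x : ℝ) (hx : x ≠ 0)
    (Γ : Fin n → ℝ)
    (hΓ : Γ = fun i => if i = lf then 1 / x else if i = lt then -(1 / x) else 0)
    (Γb : {i // i ∈ L} → ℝ)
    (hΓb : Γb = fun (i : {i // i ∈ L}) => if (i : Fin n) = lf then 1 / x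
                         else if (i : Fin n) = lt then -(1 / x) else 0)
    (hc : ∀ i, i ∉ L → c i = 0)
    (cb : {i // i ∈ L} → ℝ) (hcb : cb = fun (i : {i // i ∈ L}) => c i)
    (hKlH : Matrix.vecMul (K l) H = Γ)
    (kb : {i // i ∈ L} → ℝ) (Hb : Matrix {i // i ∈ L} {i // i ∈ L} ℝ)
    (hkbHb : Matrix.vecMul kb Hb = Γb)
    (hcyber : K.mulVec (G.mulVec PG - PD + H.mulVec c) l ≤ Pmax l) :
    K.mulVec (G.mulVec PG - PD) l ≤ Pmax l - kb ⬝ᵥ Hb.mulVec cb := by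

  have key1 : K l ⬝ᵥ H.mulVec c = (1/x) * c lf - (1/x) * c lt := by
    rw [Matrix.dotProduct_mulVec, hKlH, hΓ]
    have : ∀ i, (if i = lf then 1 / x else if i = lt then -(1 / x) else 0) * c i
        = (if i = lf then (1/x) * c lf else 0) + (if i = lt then -((1/x) * c lt) else 0) := by
      intro i
      by_cases h1 : i = lf
      · subst h1; simp [if_neg hne]
      · by_cases h2 : i = lt
        · subst h2; simp [h1]
        · simp [h1, h2]
    simp only [dotProduct, this, Finset.sum_add_distrib,
      Finset.sum_ite_eq' Finset.univ, Finset.mem_univ, if_true]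
    ring
  have key2 : kb ⬝ᵥ Hb.mulVec cb = (1/x) * c lf - (1/x) * c lt := by
    rw [Matrix.dotProduct_mulVec, hkbHb, hΓb, hcb]
    have : ∀ i : {i // i ∈ L},
        (if (i : Fin n) = lf then 1 / x else if (i : Fin n) = lt then -(1 / x) else 0) * c i
        = (if i = (⟨lf, hlf⟩ : {i // i ∈ L}) then (1/x) * c lf else 0)
          + (if i = (⟨lt, hlt⟩ : {i // i ∈ L}) then -((1/x) * c lt) else 0) := by
      intro i
      by_cases h1 : (i : Fin n) = lf
      · have : i = (⟨lf, hlf⟩ : {i // i ∈ L}) := Subtype.ext h1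
        subst this
        simp [if_neg hne, Subtype.ext_iff, hne]
      · by_cases h2 : (i : Fin n) = lt
        · have : i = (⟨lt, hlt⟩ : {i // i ∈ L}) := Subtype.ext h2
          subst this
          simp [Subtype.ext_iff, h1]
        · simp [Subtype.ext_iff, h1, h2]
    simp only [dotProduct, this, Finset.sum_add_distrib,
      Finset.sum_ite_eq' Finset.univ, Finset.mem_univ, if_true]
    ring
  have hsplit : K.mulVec (G.mulVec PG - PD + H.mulVec c) l
      = K.mulVec (G.mulVec PG - PD) l + K l ⬝ᵥ H.mulVec c := by
    simp [Matrix.mulVec_add, Matrix.mulVec]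
  rw [hsplit, key1] at hcyber
  rw [key2]
  linarith
end
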